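/- Let c be a vertex colouring of a graph G constructed greedily so that at the moment each vertex v is coloured, v's colour differs from the colours of all vertices at distance exactly 2 from v that were already coloured (i.e., from the colours of coloured neighbours of v's uncoloured neighbours), and every already-coloured neighbour set of each uncoloured vertex is rainbow throughout the process. Then the resulting complete colouring contains no bichromatic alternating cycle; that is, every cycle of G receiving exactly two colours contains a monochromatic edge. -/

import Mathlib

/-- The subgraph of `G` consisting of edges with one endpoint coloured `i`
and the other coloured `j`. -/
def bicol {V α : Type*} (G : SimpleGraph V) (c : V → α) (i j : α) : SimpleGraph V where
  Adj u w := G.Adj u w ∧ ((c u = i ∧ c w = j) ∨ (c u = j ∧ c w = i))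
  symm := ⟨fun u w h => ⟨h.1.symm, h.2.symm.imp And.symm And.symm⟩⟩
  loopless := ⟨fun u h => G.irrefl h.1⟩

/-- If the vertices of `G` are coloured one at a time (in the order `σ 0, σ 1, …`) so that
each vertex receives a colour different from those of the already-coloured neighbours of its
uncoloured neighbours, and after each step every uncoloured vertex is rainbow, then the
final colouring has no alternating bichromatic cycle. -/


lemma support_eq_map_getVert {V : Type*} {G : SimpleGraph V} :
    ∀ {u v : V} (p : G.Walk u v),
      p.support = (List.range (p.length + 1)).map p.getVert := by
  intro u v p
  induction p with
  | nil => simp [SimpleGraph.Walk.getVert]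
  | cons h q ih =>
      rw [SimpleGraph.Walk.support_cons, ih]
      rw [SimpleGraph.Walk.length_cons,
        List.range_succ_eq_map (n := q.length + 1), List.map_cons, List.map_map]
      rfl

lemma cycle_getVert_injOn {V : Type*} {G : SimpleGraph V} {m : V} {q : G.Walk m m}
    (hq : q.IsCycle) {i j : ℕ} (hi1 : 1 ≤ i) (hiL : i ≤ q.length)
    (hj1 : 1 ≤ j) (hjL : j ≤ q.length) (h : q.getVert i = q.getVert j) : i = j := by
  have htail : q.support.tail = (List.range q.length).map (fun k => q.getVert (k + 1)) := by
    rw [support_eq_map_getVert q, List.range_succ_eq_map, List.map_cons, List.tail_cons,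
      List.map_map]
    rfl
  have hnd : q.support.tail.Nodup := hq.2
  rw [htail] at hnd
  have := (List.nodup_map_iff_inj_on List.nodup_range).mp hnd
  have := this (i - 1) (List.mem_range.mpr (by omega)) (j - 1) (List.mem_range.mpr (by omega))
    (by rw [Nat.sub_add_cancel hi1, Nat.sub_add_cancel hj1]; exact h)
  omega

theorem stmt12 {V : Type*} [Fintype V] (G : SimpleGraph V) (c : V → ℕ) (n : ℕ)
    (σ : Fin n ≃ V)
    (hdist2 : ∀ i j : Fin n, j < i → ∀ x : V,
      G.Adj (σ i) x → G.Adj x (σ j) → i < σ.symm x → c (σ j) ≠ c (σ i))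
    (hrainbow : ∀ (i : Fin n) (u : V), (i : ℕ) ≤ ((σ.symm u : Fin n) : ℕ) →
      ∀ j k : Fin n, j < i → k < i → G.Adj u (σ j) → G.Adj u (σ k) →
        c (σ j) = c (σ k) → j = k) :
    ∀ a b : ℕ, a ≠ b → (bicol G c a b).IsAcyclic := by
  intro a b hab v p hp
  classical
  -- pick vertex of maximal index in the cycle
  have hsne : p.support.toFinset.Nonempty := ⟨v, by simp⟩
  obtain ⟨m, hmS, hmax⟩ := p.support.toFinset.exists_max_image
    (fun x => ((σ.symm x : Fin n) : ℕ)) hsne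
  rw [List.mem_toFinset] at hmS
  set q := p.rotate m hmS with hqdef
  have hq : q.IsCycle := hp.rotate hmS
  have hL : 3 ≤ q.length := hq.three_le_length
  set u : V := q.getVert 1 with hu
  set w : V := q.getVert (q.length - 1) with hw
  have hadj_mu : (bicol G c a b).Adj m u := by
    have := q.adj_getVert_succ (i := 0) (by omega)
    simpa using this
  have hadj_wm : (bicol G c a b).Adj w m := by
    have := q.adj_getVert_succ (i := q.length - 1) (by omega)
    rw [show q.length - 1 + 1 = q.length by omega, q.getVert_length] at this
    exact this
  have huw : u ≠ w := by
    intro h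
    have := cycle_getVert_injOn hq (i := 1) (j := q.length - 1)
      (by omega) (by omega) (by omega) (by omega) h
    omega
  have hum : u ≠ m := by
    intro h
    have : (1 : ℕ) = q.length := by
      refine cycle_getVert_injOn hq (by omega) (by omega) (by omega) (by omega) ?_
      rw [q.getVert_length]; exact h
    omega
  have hwm : w ≠ m := by
    intro h
    have : q.length - 1 = q.length := by
      refine cycle_getVert_injOn hq (by omega) (by omega) (by omega) (by omega) ?_
      rw [q.getVert_length]; exact h
    omega
  -- u and w are in the support of p
  have hmem : ∀ {x : V}, x ∈ q.support → x ∈ p.support := by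
    intro x hx
    rw [q.support_eq_cons, List.mem_cons] at hx
    rcases hx with h | h
    · exact h ▸ hmS
    · exact List.mem_of_mem_tail ((p.support_rotate m hmS).mem_iff.mp h)
  have huS : u ∈ p.support := hmem (SimpleGraph.Walk.mem_support_iff_exists_getVert.mpr ⟨1, rfl, by omega⟩)
  have hwS : w ∈ p.support := hmem (SimpleGraph.Walk.mem_support_iff_exists_getVert.mpr
    ⟨q.length - 1, rfl, by omega⟩)
  -- indices
  have hult : σ.symm u < σ.symm m := by
    have h1 := hmax u (List.mem_toFinset.mpr huS)
    have h2 : σ.symm u ≠ σ.symm m := fun h => hum (σ.symm.injective h)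
    exact lt_of_le_of_ne (by exact_mod_cast h1) h2
  have hwlt : σ.symm w < σ.symm m := by
    have h1 := hmax w (List.mem_toFinset.mpr hwS)
    have h2 : σ.symm w ≠ σ.symm m := fun h => hwm (σ.symm.injective h)
    exact lt_of_le_of_ne (by exact_mod_cast h1) h2
  -- colours of u and w agree
  have hcol : c u = c w := by
    rcases hadj_mu.2 with ⟨h1, h2⟩ | ⟨h1, h2⟩ <;>
      rcases hadj_wm.2 with ⟨h3, h4⟩ | ⟨h3, h4⟩ <;> omega
  -- apply rainbow at m
  have := hrainbow (σ.symm m) m (by simp) (σ.symm u) (σ.symm w) hult hwlt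
    (by simpa using hadj_mu.1) (by simpa using hadj_wm.1.symm)
    (by simpa using hcol)
  exact huw (by simpa using congrArg σ this)
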